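/- There is a family of size continuum of functions in H, each g in the family having (n/g(n)) bounded (so each Z_g is an Erdős–Ulam ideal), such that the corresponding simple density ideals Z_g form a ⊑-antichain: for any two distinct members Z_f, Z_g there is no bijection φ: ℕ → ℕ with A ∈ Z_f ⟹ φ^{-1}[A] ∈ Z_g. -/

import Mathlib

open Filter Finset Topology

/-- `cnt A n = |A ∩ [0,n)|`. -/
noncomputable def cnt (A : Set ℕ) (n : ℕ) : ℕ := (A ∩ Set.Iio n).ncard

/-- The simple density ideal associated to a weight `g`. -/
def Zg (g : ℕ → ℝ) : Set (Set ℕ) :=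
  {A | Tendsto (fun n => (cnt A n : ℝ) / g n) atTop (𝓝 0)}

/-- The ideal of asymptotic density zero sets. -/
def Zid : Set (Set ℕ) :=
  {A | Tendsto (fun n => (cnt A n : ℝ) / n) atTop (𝓝 0)}

/-- An ideal is increasing-invariant. -/
def IncInv (I : Set (Set ℕ)) : Prop :=
  ∀ B ∈ I, ∀ C : Set ℕ, (∀ n, cnt C n ≤ cnt B n) → C ∈ I

/-- Tallness. -/
def Tall (I : Set (Set ℕ)) : Prop :=
  ∀ A : Set ℕ, A.Infinite → ∃ B ⊆ A, B.Infinite ∧ B ∈ I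

/-- The conditions on `f` for the Erdős–Ulam ideal `EU f` to be defined. -/
def EUcond (f : ℕ → ℝ) : Prop :=
  (∀ n, 0 ≤ f n) ∧ Tendsto (fun n => ∑ i ∈ Finset.range n, f i) atTop atTop ∧
    Tendsto (fun n => f n / ∑ i ∈ Finset.range (n + 1), f i) atTop (𝓝 0)

/-- The Erdős–Ulam ideal associated to `f`. -/
def EU (f : ℕ → ℝ) : Set (Set ℕ) :=
  {A | Tendsto
    (fun n => (∑ i ∈ Finset.range n, Set.indicator A f i) / ∑ i ∈ Finset.range n, f i)
    atTop (𝓝 0)}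

/-- Being an Erdős–Ulam ideal. -/
def IsEUIdeal (I : Set (Set ℕ)) : Prop := ∃ f : ℕ → ℝ, EUcond f ∧ I = EU f
/-- `I ⊑ J`: `J` contains an isomorphic copy of `I`. -/
def SqLe (I J : Set (Set ℕ)) : Prop :=
  ∃ φ : ℕ → ℕ, Function.Bijective φ ∧ ∀ A ∈ I, φ ⁻¹' A ∈ J

namespace Stmt17



def Nseq : ℕ → ℕ
  | 0 => 2
  | k+1 => 4 * (k+1) * Nseq k

lemma Nseq_two_le : ∀ k, 2 ≤ Nseq k
  | 0 => le_refl 2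
  | k+1 => by
      have := Nseq_two_le k
      simp only [Nseq]; nlinarith

lemma Nseq_pos (k : ℕ) : 0 < Nseq k := lt_of_lt_of_le two_pos (Nseq_two_le k)

lemma le_Nseq : ∀ k, k ≤ Nseq k
  | 0 => by norm_num
  | k+1 => by
      have h := Nseq_pos k
      simp only [Nseq]; nlinarith

lemma Nseq_succ (k : ℕ) : Nseq (k+1) = 4 * (k+1) * Nseq k := rfl

lemma two_mul_Nseq_lt (k : ℕ) : 2 * Nseq k < Nseq (k+1) := by
  have := Nseq_pos k; rw [Nseq_succ]; nlinarith

lemma Nseq_lt_succ (k : ℕ) : Nseq k < Nseq (k+1) := by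
  have := Nseq_pos k; have := two_mul_Nseq_lt k; omega

lemma Nseq_strictMono : StrictMono Nseq := strictMono_nat_of_lt_succ Nseq_lt_succ

lemma Nseq_mono : Monotone Nseq := Nseq_strictMono.monotone

lemma sum_Nseq_le : ∀ m, ∑ k ∈ Finset.range (m+1), Nseq k ≤ 2 * Nseq m
  | 0 => by simp [Nseq]
  | m+1 => by
      rw [Finset.sum_range_succ]
      have h1 := sum_Nseq_le m
      have h2 := two_mul_Nseq_lt m
      omega

/-- block index -/
def blk (n : ℕ) : ℕ := Nat.findGreatest (fun k => Nseq k ≤ n) n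

lemma blk_spec {n : ℕ} (h : 2 ≤ n) : Nseq (blk n) ≤ n :=
  Nat.findGreatest_spec (P := fun k => Nseq k ≤ n) (Nat.zero_le n)
    (show Nseq 0 ≤ n from h)

lemma blk_lt {n : ℕ} (h : 2 ≤ n) : n < Nseq (blk n + 1) := by
  by_contra hc
  push_neg at hc
  have h1 : blk n + 1 ≤ n := le_trans (le_Nseq _) hc
  have := Nat.le_findGreatest (P := fun k => Nseq k ≤ n) h1 hc
  simp only [blk] at this ⊢
  omega

lemma le_blk {k n : ℕ} (h : Nseq k ≤ n) : k ≤ blk n :=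
  Nat.le_findGreatest (le_trans (le_Nseq k) h) h

lemma blk_eq {k n : ℕ} (h1 : Nseq k ≤ n) (h2 : n < Nseq (k+1)) : blk n = k := by
  have h2le : 2 ≤ n := le_trans (Nseq_two_le k) h1
  have hge : k ≤ blk n := le_blk h1
  have hle : blk n ≤ k := by
    by_contra hc
    push_neg at hc
    have : Nseq (k+1) ≤ Nseq (blk n) := Nseq_mono hc
    have := blk_spec h2le
    omega
  omega

open scoped Classical in
/-- the weight function attached to a set of block indices -/
noncomputable def gseq (x : Set ℕ) (n : ℕ) : ℕ :=
  if n < 2 then 2 else if blk n ∈ x then n else Nseq (blk n + 1)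

lemma gseq_ge {x : Set ℕ} {n : ℕ} (h : 2 ≤ n) : n ≤ gseq x n := by
  rw [gseq, if_neg (by omega)]
  split
  · exact le_refl n
  · exact (blk_lt h).le

lemma two_le_gseq (x : Set ℕ) (n : ℕ) : 2 ≤ gseq x n := by
  by_cases h : n < 2
  · rw [gseq, if_pos h]
  · exact le_trans (by omega) (gseq_ge (by omega))

lemma gseq_le {x : Set ℕ} {n : ℕ} (h : 2 ≤ n) : gseq x n ≤ Nseq (blk n + 1) := by
  rw [gseq, if_neg (by omega)]
  split
  · exact (blk_lt h).le
  · exact le_refl _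

lemma blk_mono {m n : ℕ} (hm : 2 ≤ m) (hmn : m ≤ n) : blk m ≤ blk n :=
  le_blk (le_trans (blk_spec hm) hmn)

lemma gseq_mono (x : Set ℕ) : Monotone (gseq x) := by
  intro m n hmn
  by_cases hm : m < 2
  · rw [gseq, if_pos hm]; exact two_le_gseq x n
  · push_neg at hm
    have hn : 2 ≤ n := le_trans hm hmn
    rcases lt_or_eq_of_le (blk_mono hm hmn) with hlt | heq
    · calc gseq x m ≤ Nseq (blk m + 1) := gseq_le hm
        _ ≤ Nseq (blk n) := Nseq_mono hlt
        _ ≤ n := blk_spec hn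
        _ ≤ gseq x n := gseq_ge hn
    · by_cases hbx : blk n ∈ x
      · rw [gseq, gseq, if_neg (show ¬ m < 2 by omega), if_neg (show ¬ n < 2 by omega),
          heq, if_pos hbx, if_pos hbx]
        exact hmn
      · rw [gseq, gseq, if_neg (show ¬ m < 2 by omega), if_neg (show ¬ n < 2 by omega),
          heq, if_neg hbx, if_neg hbx]

lemma gseq_of_mem {x : Set ℕ} {k n : ℕ} (hk : k ∈ x) (h1 : Nseq k ≤ n) (h2 : n < Nseq (k+1)) :
    gseq x n = n := by
  have h2le : 2 ≤ n := le_trans (Nseq_two_le k) h1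
  rw [gseq, if_neg (by omega), blk_eq h1 h2, if_pos hk]

lemma gseq_of_not_mem {x : Set ℕ} {k n : ℕ} (hk : k ∉ x) (h1 : Nseq k ≤ n) (h2 : n < Nseq (k+1)) :
    gseq x n = Nseq (k+1) := by
  have h2le : 2 ≤ n := le_trans (Nseq_two_le k) h1
  rw [gseq, if_neg (by omega), blk_eq h1 h2, if_neg hk]

lemma gseq_high {x : Set ℕ} {k n : ℕ} (hk : k ∉ x) (hn : Nseq k < n) :
    Nseq (k+1) ≤ gseq x n := by
  have h2le : 2 ≤ n := ((Nseq_two_le k).trans_lt hn).le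
  by_cases hcase : n < Nseq (k+1)
  · rw [gseq_of_not_mem hk hn.le hcase]
  · push_neg at hcase
    exact le_trans hcase (gseq_ge h2le)


def bsum (x : ℕ → Bool) (n : ℕ) : ℕ :=
  ∑ i ∈ Finset.range (n+1), (if x i then 2^i else 0)

lemma bsum_lt (x : ℕ → Bool) : ∀ n, bsum x n < 2^(n+1)
  | 0 => by simp [bsum]; split <;> norm_num
  | n+1 => by
      have h := bsum_lt x n
      rw [bsum, Finset.sum_range_succ]
      have : (if x (n+1) then 2^(n+1) else 0) ≤ 2^(n+1) := by split <;> simp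
      have hb : bsum x n = ∑ i ∈ Finset.range (n+1), (if x i then 2^i else 0) := rfl
      rw [← hb]
      have : 2^(n+1) + 2^(n+1) = 2^(n+2) := by ring
      omega

lemma bsum_succ (x : ℕ → Bool) (n : ℕ) :
    bsum x (n+1) = bsum x n + (if x (n+1) then 2^(n+1) else 0) := by
  rw [bsum, Finset.sum_range_succ]; rfl

lemma bsum_inj {x y : ℕ → Bool} : ∀ n, bsum x n = bsum y n → ∀ i ≤ n, x i = y i := by
  intro n
  induction n with
  | zero =>
      intro h i hi
      interval_cases i
      simp only [bsum, Finset.sum_range_one] at h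
      cases hx : x 0 <;> cases hy : y 0 <;> simp [hx, hy] at h ⊢ <;> omega
  | succ n ih =>
      intro h i hi
      have hx1 := bsum_succ x n
      have hy1 := bsum_succ y n
      have hbx := bsum_lt x n
      have hby := bsum_lt y n
      have key : bsum x n = bsum y n ∧ x (n+1) = y (n+1) := by
        cases hx : x (n+1) <;> cases hy : y (n+1) <;>
          simp [hx, hy] at hx1 hy1 <;> constructor <;> first | rfl | omega
      rcases Nat.lt_or_ge i (n+1) with hlt | hge
      · exact ih key.1 i (by omega)
      · have : i = n + 1 := by omega
        rw [this]; exact key.2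

def enc (x : ℕ → Bool) (n : ℕ) : ℕ := 2^(n+1) + bsum x n

lemma enc_lt (x : ℕ → Bool) (n : ℕ) : enc x n < 2^(n+2) := by
  have := bsum_lt x n
  have : 2^(n+1) + 2^(n+1) = 2^(n+2) := by ring
  rw [enc]; omega

lemma enc_ge (x : ℕ → Bool) (n : ℕ) : 2^(n+1) ≤ enc x n := Nat.le_add_right _ _

lemma enc_strictMono (x : ℕ → Bool) : StrictMono (enc x) := by
  apply strictMono_nat_of_lt_succ
  intro n
  calc enc x n < 2^(n+2) := enc_lt x n
    _ ≤ enc x (n+1) := enc_ge x (n+1)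

lemma self_le_enc (x : ℕ → Bool) (n : ℕ) : n + 2 ≤ enc x n := by
  have h := enc_ge x n
  have : n + 2 ≤ 2^(n+1) := by
    calc n + 2 = (n+1) + 1 := by ring
      _ ≤ 2^(n+1) := Nat.succ_le_of_lt (Nat.lt_two_pow_self (n := n+1))
  omega

lemma enc_level {x y : ℕ → Bool} {n m : ℕ} (h : enc x n = enc y m) : n = m := by
  rcases lt_trichotomy n m with hlt | heq | hgt
  · exfalso
    have h1 : enc x n < 2^(n+2) := enc_lt x n
    have h2 : 2^(m+1) ≤ enc y m := enc_ge y m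
    have : (2:ℕ)^(n+2) ≤ 2^(m+1) := Nat.pow_le_pow_right (by norm_num) (by omega)
    omega
  · exact heq
  · exfalso
    have h1 : enc y m < 2^(m+2) := enc_lt y m
    have h2 : 2^(n+1) ≤ enc x n := enc_ge x n
    have : (2:ℕ)^(m+2) ≤ 2^(n+1) := Nat.pow_le_pow_right (by norm_num) (by omega)
    omega

def XX (x : ℕ → Bool) : Set ℕ := Set.range (enc x)

lemma enc_mem_XX (x : ℕ → Bool) (n : ℕ) : enc x n ∈ XX x := ⟨n, rfl⟩

lemma enc_not_mem_XX {x y : ℕ → Bool} {i0 : ℕ} (hxy : x i0 ≠ y i0) {n : ℕ} (hn : i0 ≤ n) :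
    enc y n ∉ XX x := by
  rintro ⟨m, hm⟩
  have hmn : m = n := enc_level hm
  subst hmn
  have : bsum x m = bsum y m := by
    have := hm
    rw [enc, enc] at this
    omega
  exact hxy (bsum_inj m this i0 hn)


lemma not_sqle {x y : ℕ → Bool} (hxy : x ≠ y) :
    ¬ SqLe (Zg (fun n => (gseq (XX x) n : ℝ))) (Zg (fun n => (gseq (XX y) n : ℝ))) := by
  rintro ⟨φ, hbij, hmap⟩
  obtain ⟨i0, hi0⟩ := Function.ne_iff.mp hxy
  set K : ℕ → ℕ := fun j => enc y (i0 + j) with hK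
  have hKy : ∀ j, K j ∈ XX y := fun j => enc_mem_XX y (i0+j)
  have hKx : ∀ j, K j ∉ XX x := fun j => enc_not_mem_XX hi0 (by omega)
  have hKmono : StrictMono K := fun a b hab => enc_strictMono y (by omega)
  have hKge : ∀ j, j ≤ K j := fun j => le_trans (by omega) (self_le_enc y (i0+j))
  set T : ℕ → Finset ℕ := fun k =>
    (Finset.range (2 * Nseq k)).filter (fun m => Nseq k ≤ φ m) with hT
  have hTlo : ∀ k, Nseq k ≤ (T k).card := by
    intro k
    have hTk : (T k) = (Finset.range (2*Nseq k)).filter (fun m => Nseq k ≤ φ m) := rfl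
    have hsplit := Finset.card_filter_add_card_filter_not
      (s := Finset.range (2*Nseq k)) (p := fun m => Nseq k ≤ φ m)
    rw [← hTk] at hsplit
    have hneg : ((Finset.range (2*Nseq k)).filter (fun m => ¬ Nseq k ≤ φ m)).card
        ≤ (Finset.range (Nseq k)).card := by
      apply Finset.card_le_card_of_injOn φ
      · intro m hm
        simp only [Finset.mem_coe, Finset.mem_filter, Finset.mem_range, not_le] at hm
        simp only [Finset.coe_range, Set.mem_Iio, Finset.mem_coe, Finset.mem_range]
        exact hm.2
      · exact Function.Injective.injOn hbij.injective
    simp only [Finset.card_range] at hsplit hneg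
    omega
  have hThi : ∀ k, (T k).card ≤ 2 * Nseq k := fun k =>
    le_trans (Finset.card_filter_le _ _) (by simp)
  set U : Set ℕ := ⋃ j, ((T (K j) : Set ℕ)) with hU
  set A : Set ℕ := φ '' U with hA
  have hpre : φ ⁻¹' A = U := Set.preimage_image_eq U hbij.injective
  -- Claim 1 : A ∈ Zg (g_x)
  have hA_mem : A ∈ Zg (fun n => (gseq (XX x) n : ℝ)) := by
    rw [Zg, Set.mem_setOf_eq, Metric.tendsto_atTop]
    intro ε hε
    obtain ⟨j0, hj0⟩ := exists_nat_one_div_lt hε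
    refine ⟨Nseq (K j0) + 1, fun n hn => ?_⟩
    have hPle : ∀ j, Nseq (K j) < n → j ≤ n := fun j hj =>
      le_trans (le_trans (hKge j) (le_Nseq (K j))) hj.le
    have hP0 : Nseq (K j0) < n := by omega
    set J := Nat.findGreatest (fun j => Nseq (K j) < n) n with hJ
    have hJspec : Nseq (K J) < n :=
      Nat.findGreatest_spec (P := fun j => Nseq (K j) < n) (hPle j0 hP0) hP0
    have hj0J : j0 ≤ J := Nat.le_findGreatest (hPle j0 hP0) hP0
    have hJKJ : J ≤ K J := hKge J
    -- counting
    have hsub : A ∩ Set.Iio n ⊆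
        (((Finset.range (J+1)).biUnion (fun j => (T (K j)).image φ) : Finset ℕ) : Set ℕ) := by
      rintro a ⟨⟨m, hmU, rfl⟩, ha2⟩
      have ha2' : φ m < n := ha2
      rw [hU, Set.mem_iUnion] at hmU
      obtain ⟨j, hj⟩ := hmU
      rw [Finset.mem_coe, hT] at hj
      have hφm : Nseq (K j) ≤ φ m := (Finset.mem_filter.mp hj).2
      have hPj : Nseq (K j) < n := lt_of_le_of_lt hφm ha2'
      have hjJ : j ≤ J := Nat.le_findGreatest (hPle j hPj) hPj
      rw [Finset.coe_biUnion]
      exact Set.mem_biUnion (Finset.mem_coe.mpr (Finset.mem_range.mpr (show j < J + 1 by omega)))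
        (Finset.mem_coe.mpr (Finset.mem_image.mpr ⟨m, hj, rfl⟩))
    have hcnt : cnt A n ≤ 4 * Nseq (K J) := by
      have h1 : cnt A n ≤ ((Finset.range (J+1)).biUnion fun j => (T (K j)).image φ).card := by
        rw [cnt]
        calc (A ∩ Set.Iio n).ncard
            ≤ (((Finset.range (J+1)).biUnion fun j => (T (K j)).image φ : Finset ℕ) : Set ℕ).ncard :=
              Set.ncard_le_ncard hsub (Finset.finite_toSet _)
          _ = _ := Set.ncard_coe_finset _
      have h2 : ((Finset.range (J+1)).biUnion fun j => (T (K j)).image φ).card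
          ≤ ∑ j ∈ Finset.range (J+1), ((T (K j)).image φ).card := Finset.card_biUnion_le
      have h3 : ∑ j ∈ Finset.range (J+1), ((T (K j)).image φ).card
          ≤ ∑ j ∈ Finset.range (J+1), 2 * Nseq (K j) :=
        Finset.sum_le_sum fun j _ => le_trans Finset.card_image_le (hThi (K j))
      have h4 : ∑ j ∈ Finset.range (J+1), Nseq (K j) ≤ ∑ k ∈ Finset.range (K J + 1), Nseq k := by
        have himg : ∑ j ∈ Finset.range (J+1), Nseq (K j)
            = ∑ k ∈ (Finset.range (J+1)).image K, Nseq k :=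
          (Finset.sum_image (fun a _ b _ h => hKmono.injective h)).symm
        rw [himg]
        apply Finset.sum_le_sum_of_subset
        intro k hk
        simp only [Finset.mem_image, Finset.mem_range] at hk ⊢
        obtain ⟨j, hj1, rfl⟩ := hk
        have : K j ≤ K J := hKmono.monotone (by omega)
        omega
      have h5 := sum_Nseq_le (K J)
      calc cnt A n ≤ ((Finset.range (J+1)).biUnion fun j => (T (K j)).image φ).card := h1
        _ ≤ ∑ j ∈ Finset.range (J+1), ((T (K j)).image φ).card := h2
        _ ≤ ∑ j ∈ Finset.range (J+1), 2 * Nseq (K j) := h3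
        _ = 2 * ∑ j ∈ Finset.range (J+1), Nseq (K j) := by rw [Finset.mul_sum]
        _ ≤ 2 * ∑ k ∈ Finset.range (K J + 1), Nseq k := Nat.mul_le_mul_left 2 h4
        _ ≤ 2 * (2 * Nseq (K J)) := Nat.mul_le_mul_left 2 h5
        _ = 4 * Nseq (K J) := by ring
    have hgx : Nseq (K J + 1) ≤ gseq (XX x) n := gseq_high (hKx J) hJspec
    -- final estimate
    rw [Real.dist_eq, sub_zero, abs_of_nonneg (by positivity)]
    have hNpos : (0:ℝ) < Nseq (K J) := by exact_mod_cast Nseq_pos (K J)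
    have hgx' : (4 * ((K J : ℝ) + 1) * Nseq (K J)) ≤ (gseq (XX x) n : ℝ) := by
      rw [Nseq_succ] at hgx
      exact_mod_cast hgx
    have hgpos : (0:ℝ) < gseq (XX x) n := lt_of_lt_of_le (by positivity) hgx'
    have hcnt' : (cnt A n : ℝ) ≤ 4 * Nseq (K J) := by exact_mod_cast hcnt
    have hle : (cnt A n : ℝ) / gseq (XX x) n
        ≤ (4 * Nseq (K J)) / (4 * ((K J : ℝ) + 1) * Nseq (K J)) :=
      div_le_div₀ (by positivity) hcnt' (by positivity) hgx'
    have heq : (4 * (Nseq (K J):ℝ)) / (4 * ((K J : ℝ) + 1) * Nseq (K J))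
        = 1 / ((K J : ℝ) + 1) := by
      rw [div_eq_div_iff (by positivity) (by positivity)]
      ring
    have hfin : (1:ℝ) / ((K J : ℝ) + 1) ≤ 1 / ((j0 : ℝ) + 1) := by
      apply one_div_le_one_div_of_le (by positivity)
      have : j0 ≤ K J := le_trans hj0J hJKJ
      exact_mod_cast by omega
    calc (cnt A n : ℝ) / gseq (XX x) n
        ≤ (4 * Nseq (K J)) / (4 * ((K J : ℝ) + 1) * Nseq (K J)) := hle
      _ = 1 / ((K J : ℝ) + 1) := heq
      _ ≤ 1 / ((j0 : ℝ) + 1) := hfin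
      _ < ε := by exact_mod_cast hj0
  -- Claim 2 : φ ⁻¹' A ∉ Zg (g_y)
  have hUZ : Tendsto (fun n => (cnt U n : ℝ) / (gseq (XX y) n : ℝ)) atTop (𝓝 0) := by
    have h := hmap A hA_mem
    rw [Zg, Set.mem_setOf_eq, hpre] at h
    exact h
  have hev := hUZ.eventually (gt_mem_nhds (by norm_num : (0:ℝ) < 1/2))
  rw [eventually_atTop] at hev
  obtain ⟨N, hN⟩ := hev
  set n := 2 * Nseq (K N) with hn
  have hnN : N ≤ n := by
    have h1 := hKge N
    have h2 := le_Nseq (K N)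
    omega
  have h1 : (T (K N) : Set ℕ) ⊆ U ∩ Set.Iio n := by
    intro m hm
    constructor
    · exact Set.mem_iUnion.mpr ⟨N, hm⟩
    · rw [Finset.mem_coe, hT] at hm
      have := Finset.mem_range.mp (Finset.mem_filter.mp hm).1
      exact this
  have h2 : Nseq (K N) ≤ cnt U n := by
    rw [cnt]
    calc Nseq (K N) ≤ (T (K N)).card := hTlo _
      _ = ((T (K N) : Set ℕ)).ncard := (Set.ncard_coe_finset _).symm
      _ ≤ (U ∩ Set.Iio n).ncard :=
        Set.ncard_le_ncard h1 ((Set.finite_Iio n).subset Set.inter_subset_right)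
  have hgy : gseq (XX y) n = n :=
    gseq_of_mem (hKy N) (by omega) (by rw [hn]; exact two_mul_Nseq_lt (K N))
  have hlt := hN n hnN
  rw [hgy] at hlt
  have hNpos : (0:ℝ) < Nseq (K N) := by exact_mod_cast Nseq_pos (K N)
  have h2' : (Nseq (K N) : ℝ) ≤ cnt U n := by exact_mod_cast h2
  have hnr : (n:ℝ) = 2 * Nseq (K N) := by exact_mod_cast hn
  have hcontra : (1:ℝ)/2 ≤ (cnt U n : ℝ) / n := by
    rw [hnr, div_le_div_iff₀ (by norm_num) (by positivity)]
    linarith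
  linarith

end Stmt17

namespace Stmt17

lemma XX_diff {x y : ℕ → Bool} (hxy : x ≠ y) : ∃ k, k ∈ XX y ∧ k ∉ XX x := by
  obtain ⟨i0, hi0⟩ := Function.ne_iff.mp hxy
  exact ⟨enc y i0, enc_mem_XX y i0, enc_not_mem_XX hi0 le_rfl⟩

lemma gseq_XX_inj : Function.Injective (fun x : ℕ → Bool => gseq (XX x)) := by
  intro x y h
  by_contra hxy
  obtain ⟨k, hky, hkx⟩ := XX_diff hxy
  have h1 : gseq (XX y) (Nseq k) = Nseq k := gseq_of_mem hky le_rfl (Nseq_lt_succ k)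
  have h2 : gseq (XX x) (Nseq k) = Nseq (k+1) := gseq_of_not_mem hkx le_rfl (Nseq_lt_succ k)
  have h3 : gseq (XX x) (Nseq k) = gseq (XX y) (Nseq k) := congrFun h (Nseq k)
  have h4 := Nseq_lt_succ k
  omega

lemma gseq_tendsto (x : ℕ → Bool) : Tendsto (gseq (XX x)) atTop atTop := by
  apply tendsto_atTop_mono' atTop (eventually_atTop.mpr ⟨2, fun n hn => gseq_ge hn⟩)
  exact tendsto_id

lemma not_tendsto_ratio (x : ℕ → Bool) :
    ¬ Tendsto (fun n : ℕ => (n : ℝ) / (gseq (XX x) n : ℝ)) atTop (𝓝 0) := by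
  intro h
  have hev := h.eventually (gt_mem_nhds (by norm_num : (0:ℝ) < 1))
  rw [eventually_atTop] at hev
  obtain ⟨N, hN⟩ := hev
  set k := enc x N with hk
  set n := Nseq k with hn
  have hkN : N ≤ n := le_trans (le_trans (by omega) (self_le_enc x N)) (le_Nseq k)
  have hg : gseq (XX x) n = n := gseq_of_mem (enc_mem_XX x N) le_rfl (Nseq_lt_succ k)
  have hlt := hN n hkN
  rw [hg] at hlt
  have hpos : (0:ℝ) < n := by exact_mod_cast Nseq_pos k
  rw [div_self (ne_of_gt hpos)] at hlt
  linarith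

lemma ratio_le_one (x : ℕ → Bool) (n : ℕ) : (n:ℝ)/(gseq (XX x) n : ℝ) ≤ 1 := by
  have h2 := two_le_gseq (XX x) n
  have hpos : (0:ℝ) < gseq (XX x) n := by exact_mod_cast (by omega : 0 < gseq (XX x) n)
  rw [div_le_one hpos]
  by_cases h : 2 ≤ n
  · exact_mod_cast gseq_ge h
  · exact_mod_cast le_trans (by omega : n ≤ 2) h2

lemma card_G :
    Cardinal.mk (Set.range (fun x : ℕ → Bool => gseq (XX x))) = Cardinal.continuum := by
  rw [Cardinal.mk_range_eq _ gseq_XX_inj]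
  have h1 : Cardinal.mk (ℕ → Bool) = (2 : Cardinal) ^ (Cardinal.aleph0 : Cardinal) := by
    simp [Cardinal.mk_arrow]
  rw [h1, Cardinal.two_power_aleph0]

end Stmt17

/-- a `⊑`-antichain of size continuum of Erdős–Ulam simple
density ideals. -/
theorem stmt_17 :
    ∃ G : Set (ℕ → ℕ), Cardinal.mk G = Cardinal.continuum ∧
      (∀ g ∈ G, Monotone g ∧ Tendsto g atTop atTop ∧
        (¬ Tendsto (fun n : ℕ => (n : ℝ) / (g n : ℝ)) atTop (𝓝 0)) ∧
        (∃ C : ℝ, ∀ n : ℕ, (n : ℝ) / (g n : ℝ) ≤ C)) ∧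
      (∀ f ∈ G, ∀ g ∈ G, f ≠ g →
        Zg (fun n => (f n : ℝ)) ≠ Zg (fun n => (g n : ℝ)) ∧
        ¬ SqLe (Zg (fun n => (f n : ℝ))) (Zg (fun n => (g n : ℝ)))) := by
  refine ⟨Set.range (fun x : ℕ → Bool => Stmt17.gseq (Stmt17.XX x)), Stmt17.card_G, ?_, ?_⟩
  · rintro g ⟨x, rfl⟩
    exact ⟨Stmt17.gseq_mono _, Stmt17.gseq_tendsto x, Stmt17.not_tendsto_ratio x,
      ⟨1, Stmt17.ratio_le_one x⟩⟩
  · rintro f ⟨x, rfl⟩ g ⟨y, rfl⟩ hfg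
    have hxy : x ≠ y := fun h => hfg (by rw [h])
    have hns := Stmt17.not_sqle hxy
    refine ⟨?_, hns⟩
    intro heq
    exact hns ⟨id, Function.bijective_id, fun A hA => by
      rw [Set.preimage_id]; exact heq ▸ hA⟩
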